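/- Let n ∈ ℕ and q ∈ ℕ. Let T : Fin (q+1) → Matrix (Fin n) (Fin n) ℝ with T i invertible for every i, and let Φstep, Qstep : Fin q → Matrix (Fin n) (Fin n) ℝ. Define the starred steps Φstep* i := T (i+1) · Φstep i · (T i)⁻¹ and Qstep* i := T (i+1) · Qstep i · (T (i+1))ᵀ (indices cast into Fin (q+1)). Define accumulated sequences by Φacc 0 = 1, Φacc (i+1) = Φstep i · Φacc i; Qacc 0 = 0, Qacc (i+1) = Φstep i · Qacc i · (Φstep i)ᵀ + Qstep i; and analogously Φacc* and Qacc* from the starred steps. Then for every i ≤ q: Φacc* i = T i · Φacc i · (T 0)⁻¹ and Qacc* i = T i · Qacc i · (T i)ᵀ. -/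
import Mathlib


open Matrix

/-- **Discrete accumulation of transition and noise matrices (Corollary 3 / correctness of
Algorithm 1, Transforming Propagation)**: over `q` IMU sub-intervals, the accumulated
sequences are defined by the recursions `Φacc 0 = 1`, `Φacc (i+1) = Φstep i · Φacc i`,
`Qacc 0 = 0`, `Qacc (i+1) = Φstep i · Qacc i · (Φstep i)ᵀ + Qstep i`, and analogously
`Φacc*`, `Qacc*` from the starred single-step matrices
`Φstep* i = T (i+1) · Φstep i · (T i)⁻¹` and `Qstep* i = T (i+1) · Qstep i · (T (i+1))ᵀ`.
Then for every `i ≤ q`:  `Φacc* i = T i · Φacc i · (T 0)⁻¹` and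
`Qacc* i = T i · Qacc i · (T i)ᵀ`. -/
theorem accumulated_matrices_transformation (n q : ℕ)
    (T : Fin (q + 1) → Matrix (Fin n) (Fin n) ℝ)
    (hT : ∀ i, IsUnit (T i))
    (Φstep Qstep : Fin q → Matrix (Fin n) (Fin n) ℝ)
    (Φacc Qacc ΦaccStar QaccStar : Fin (q + 1) → Matrix (Fin n) (Fin n) ℝ)
    (hΦ₀ : Φacc 0 = 1)
    (hΦ : ∀ i : Fin q, Φacc i.succ = Φstep i * Φacc i.castSucc)
    (hQ₀ : Qacc 0 = 0)
    (hQ : ∀ i : Fin q, Qacc i.succ = Φstep i * Qacc i.castSucc * (Φstep i)ᵀ + Qstep i)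
    (hΦstar₀ : ΦaccStar 0 = 1)
    (hΦstar : ∀ i : Fin q, ΦaccStar i.succ
      = (T i.succ * Φstep i * (T i.castSucc)⁻¹) * ΦaccStar i.castSucc)
    (hQstar₀ : QaccStar 0 = 0)
    (hQstar : ∀ i : Fin q, QaccStar i.succ
      = (T i.succ * Φstep i * (T i.castSucc)⁻¹) * QaccStar i.castSucc
          * (T i.succ * Φstep i * (T i.castSucc)⁻¹)ᵀ
        + T i.succ * Qstep i * (T i.succ)ᵀ) :
    ∀ i : Fin (q + 1),
      ΦaccStar i = T i * Φacc i * (T 0)⁻¹ ∧ QaccStar i = T i * Qacc i * (T i)ᵀ := by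
  intro i
  induction i using Fin.induction with
  | zero =>
    constructor
    · rw [hΦstar₀, hΦ₀, Matrix.mul_one, Matrix.mul_nonsing_inv _ ((Matrix.isUnit_iff_isUnit_det _).mp (hT 0))]
    · rw [hQstar₀, hQ₀, Matrix.mul_zero, Matrix.zero_mul]
  | succ i ih =>
    obtain ⟨ih1, ih2⟩ := ih
    have hinv : (T i.castSucc)⁻¹ * T i.castSucc = 1 :=
      Matrix.nonsing_inv_mul _ ((Matrix.isUnit_iff_isUnit_det _).mp (hT i.castSucc))
    constructor
    · rw [hΦstar i, ih1, hΦ i]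
      rw [show T i.succ * Φstep i * (T i.castSucc)⁻¹ * (T i.castSucc * Φacc i.castSucc * (T 0)⁻¹)
          = T i.succ * Φstep i * ((T i.castSucc)⁻¹ * T i.castSucc) * Φacc i.castSucc * (T 0)⁻¹ by
        simp [Matrix.mul_assoc], hinv, Matrix.mul_one, Matrix.mul_assoc (T i.succ)]
    · rw [hQstar i, ih2, hQ i]
      simp only [Matrix.transpose_mul, Matrix.mul_assoc]
      rw [show (T i.castSucc)⁻¹ * (T i.castSucc * (Qacc i.castSucc * ((T i.castSucc)ᵀ * (((T i.castSucc)⁻¹)ᵀ * ((Φstep i)ᵀ * (T i.succ)ᵀ)))))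
          = ((T i.castSucc)⁻¹ * T i.castSucc) * (Qacc i.castSucc * ((T i.castSucc)ᵀ * ((T i.castSucc)⁻¹ᵀ * ((Φstep i)ᵀ * (T i.succ)ᵀ)))) by
        simp [Matrix.mul_assoc], hinv, Matrix.one_mul]
      rw [show (T i.castSucc)ᵀ * ((T i.castSucc)⁻¹ᵀ * ((Φstep i)ᵀ * (T i.succ)ᵀ))
          = ((T i.castSucc)⁻¹ * T i.castSucc)ᵀ * ((Φstep i)ᵀ * (T i.succ)ᵀ) by
        simp [Matrix.transpose_mul, Matrix.mul_assoc], hinv]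
      simp [Matrix.mul_add, Matrix.add_mul, Matrix.mul_assoc]
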